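/- The number of permutations of {1,...,n} avoiding the pattern 123 equals the Catalan number C_n = (2n)! / (n! (n+1)!). -/

import Mathlib

open Equiv Finset

/-- A permutation of `{1,…,n}` avoids the pattern 123 if there are no
positions `i < j < k` with `π i < π j < π k`. -/
def Avoids123 {n : ℕ} (π : Equiv.Perm (Fin n)) : Prop :=
  ¬ ∃ i j k : Fin n, i < j ∧ j < k ∧ π i < π j ∧ π j < π k

namespace Av123

section helpers
variable {α : Type*} [Finite α]

lemma card_split {P Q R : α → Prop} (h : ∀ a, P a ↔ Q a ∨ R a)
    (hd : ∀ a, ¬(Q a ∧ R a)) :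
    Nat.card {a // P a} = Nat.card {a // Q a} + Nat.card {a // R a} := by
  classical
  have e1 : {a // P a} ≃ {a // Q a ∨ R a} := Equiv.subtypeEquivRight h
  have e2 : {a // Q a ∨ R a} ≃ {a // Q a} ⊕ {a // R a} :=
    subtypeOrEquiv Q R (by
      simp only [Pi.disjoint_iff, Prop.disjoint_iff]
      exact fun a ⟨hq, hr⟩ => hd a ⟨hq, hr⟩)
  rw [Nat.card_congr (e1.trans e2), Nat.card_sum]

omit [Finite α] in
lemma card_zero_of {P : α → Prop} (h : ∀ a, ¬ P a) : Nat.card {a // P a} = 0 := by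
  have : IsEmpty {a // P a} := ⟨fun x => h x.1 x.2⟩
  exact Nat.card_of_isEmpty
end helpers

def DecPre {n : ℕ} (π : Equiv.Perm (Fin n)) (r : ℕ) : Prop :=
  ∀ i j : Fin n, i < j → (j : ℕ) < r → π j < π i

lemma decPre_mono {n : ℕ} {π : Equiv.Perm (Fin n)} {r s : ℕ} (h : r ≤ s)
    (hs : DecPre π s) : DecPre π r := fun i j hij hj => hs i j hij (lt_of_lt_of_le hj h)

lemma decPre_zero {n : ℕ} (π : Equiv.Perm (Fin n)) : DecPre π 0 := by
  intro i j _ hj; omega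

lemma decPre_one {n : ℕ} (π : Equiv.Perm (Fin n)) : DecPre π 1 := by
  intro i j hij hj
  have : (i : ℕ) < (j : ℕ) := hij
  omega

noncomputable instance {n : ℕ} (π : Equiv.Perm (Fin n)) : DecidablePred (DecPre π) :=
  fun _ => Classical.dec _

noncomputable def run {n : ℕ} (π : Equiv.Perm (Fin n)) : ℕ :=
  Nat.findGreatest (DecPre π) n

lemma run_le {n : ℕ} (π : Equiv.Perm (Fin n)) : run π ≤ n := Nat.findGreatest_le n

lemma decPre_run {n : ℕ} (π : Equiv.Perm (Fin n)) : DecPre π (run π) :=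
  Nat.findGreatest_spec (Nat.zero_le n) (decPre_zero π)

lemma le_run_iff {n : ℕ} {π : Equiv.Perm (Fin n)} {k : ℕ} (hk : k ≤ n) :
    DecPre π k ↔ k ≤ run π :=
  ⟨fun h => Nat.le_findGreatest hk h, fun h => decPre_mono h (decPre_run π)⟩

lemma one_le_run {n : ℕ} (π : Equiv.Perm (Fin n)) (hn : 1 ≤ n) : 1 ≤ run π :=
  (le_run_iff hn).mp (decPre_one π)

lemma run_eq_of {n : ℕ} {π : Equiv.Perm (Fin n)} {k : ℕ} (h1 : DecPre π k) (hk : k ≤ n)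
    (h2 : k < n → ¬ DecPre π (k + 1)) : run π = k := by
  refine le_antisymm ?_ ((le_run_iff hk).mp h1)
  by_contra hlt
  push_neg at hlt
  have hkn : k < n := lt_of_lt_of_le hlt (run_le π)
  exact h2 hkn (decPre_mono hlt (decPre_run π))

lemma not_decPre_succ_run {n : ℕ} {π : Equiv.Perm (Fin n)} (h : run π < n) :
    ¬ DecPre π (run π + 1) := by
  intro hd
  exact absurd ((le_run_iff h).mp hd) (by omega)

/-- insertion of the largest value at position `p` -/
def ins {n : ℕ} (p : Fin (n + 1)) (π : Equiv.Perm (Fin n)) : Equiv.Perm (Fin (n + 1)) :=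
  (finSuccEquiv' p).trans (π.optionCongr.trans finSuccEquivLast.symm)

@[simp] lemma ins_self {n : ℕ} (p : Fin (n + 1)) (π : Equiv.Perm (Fin n)) :
    ins p π p = Fin.last n := by
  simp [ins, finSuccEquiv'_at, Equiv.optionCongr]

@[simp] lemma ins_succAbove {n : ℕ} (p : Fin (n + 1)) (π : Equiv.Perm (Fin n)) (i : Fin n) :
    ins p π (p.succAbove i) = Fin.castSucc (π i) := by
  simp [ins, finSuccEquiv'_succAbove, Equiv.optionCongr]

lemma ins_bijective (n : ℕ) :
    Function.Bijective (fun x : Fin (n + 1) × Equiv.Perm (Fin n) => ins x.1 x.2) := by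
  rw [Fintype.bijective_iff_injective_and_card]
  constructor
  · rintro ⟨p, π⟩ ⟨q, ρ⟩ h
    simp only at h
    have hpq : p = q := by
      have h1 : ins q ρ p = Fin.last n := by rw [← h]; simp
      have h2 : ins q ρ q = Fin.last n := by simp
      exact (ins q ρ).injective (h1.trans h2.symm)
    subst hpq
    have hπ : π = ρ := by
      ext i
      have := congrArg (fun σ : Equiv.Perm (Fin (n+1)) => σ (p.succAbove i)) h
      simp only [ins_succAbove] at this
      exact Fin.castSucc_injective n this |> congrArg Fin.val
    simp [hπ]
  · simp [Fintype.card_perm, Nat.factorial_succ]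

lemma coe_le_succAbove {n : ℕ} (p : Fin (n + 1)) (j : Fin n) :
    (j : ℕ) ≤ (p.succAbove j : ℕ) := by
  rcases lt_or_ge (Fin.castSucc j) p with h | h
  · rw [Fin.succAbove_of_castSucc_lt p j h]; simp
  · rw [Fin.succAbove_of_le_castSucc p j h]; simp [Fin.val_succ]

lemma avoids_ins {n : ℕ} (p : Fin (n + 1)) (π : Equiv.Perm (Fin n)) :
    Avoids123 (ins p π) ↔ Avoids123 π ∧ DecPre π p := by
  constructor
  · intro h
    constructor
    · rintro ⟨i, j, k, hij, hjk, h1, h2⟩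
      exact h ⟨p.succAbove i, p.succAbove j, p.succAbove k,
        (Fin.succAbove_lt_succAbove_iff).mpr hij, (Fin.succAbove_lt_succAbove_iff).mpr hjk,
        by simpa using (Fin.castSucc_lt_castSucc_iff).mpr h1,
        by simpa using (Fin.castSucc_lt_castSucc_iff).mpr h2⟩
    · intro i j hij hjp
      by_contra hc
      push_neg at hc
      have hne : π i ≠ π j := fun e => (Equiv.injective π e ▸ hij).false
      have h1 : π i < π j := lt_of_le_of_ne hc hne
      have hjp' : Fin.castSucc j < p := by
        rw [Fin.lt_def]; simpa using hjp
      have hip' : Fin.castSucc i < p := by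
        rw [Fin.lt_def]
        have : (i : ℕ) < (j : ℕ) := hij
        simp; omega
      refine h ⟨p.succAbove i, p.succAbove j, p, ?_, ?_, ?_, ?_⟩
      · exact (Fin.succAbove_lt_succAbove_iff).mpr hij
      · rw [Fin.succAbove_of_castSucc_lt p j hjp']; exact hjp'
      · simpa using (Fin.castSucc_lt_castSucc_iff).mpr h1
      · rw [ins_succAbove, ins_self]; exact Fin.castSucc_lt_last _
  · rintro ⟨hav, hdec⟩ ⟨a, b, c, hab, hbc, h1, h2⟩
    have hbp : b ≠ p := by
      intro e; subst e
      rw [ins_self] at h2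
      exact absurd h2 (Fin.le_last _).not_gt
    have hap : a ≠ p := by
      intro e; subst e
      rw [ins_self] at h1
      exact absurd h1 (Fin.le_last _).not_gt
    obtain ⟨i, hi⟩ := Fin.exists_succAbove_eq hap
    obtain ⟨j, hj⟩ := Fin.exists_succAbove_eq hbp
    have hij : i < j := by
      rw [← Fin.succAbove_lt_succAbove_iff (p := p), hi, hj]; exact hab
    by_cases hcp : c = p
    · have hjp : (j : ℕ) < (p : ℕ) := by
        have h1' : p.succAbove j < p := by rw [hj, ← hcp]; exact hbc
        have := coe_le_succAbove p j
        have : (p.succAbove j : ℕ) < (p : ℕ) := h1'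
        omega
      have := hdec i j hij hjp
      rw [← hi, ← hj, ins_succAbove, ins_succAbove] at h1
      exact absurd (Fin.castSucc_lt_castSucc_iff.mp h1) this.asymm
    · obtain ⟨k, hk⟩ := Fin.exists_succAbove_eq hcp
      have hjk : j < k := by
        rw [← Fin.succAbove_lt_succAbove_iff (p := p), hj, hk]; exact hbc
      rw [← hi, ← hj, ins_succAbove, ins_succAbove] at h1
      rw [← hj, ← hk, ins_succAbove, ins_succAbove] at h2
      exact hav ⟨i, j, k, hij, hjk, Fin.castSucc_lt_castSucc_iff.mp h1,
        Fin.castSucc_lt_castSucc_iff.mp h2⟩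

lemma run_ins_zero {n : ℕ} (π : Equiv.Perm (Fin n)) : run (ins 0 π) = run π + 1 := by
  apply run_eq_of
  · intro i' j' hij' hj'
    rcases Fin.eq_zero_or_eq_succ j' with rfl | ⟨t, rfl⟩
    · exact absurd hij' (Fin.not_lt_zero _)
    rcases Fin.eq_zero_or_eq_succ i' with rfl | ⟨s, rfl⟩
    · have : ins 0 π t.succ = Fin.castSucc (π t) := by
        rw [← Fin.succAbove_zero_apply, ins_succAbove]
      rw [this]
      have h0 : ins 0 π 0 = Fin.last n := ins_self 0 π
      rw [h0]
      exact Fin.castSucc_lt_last _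
    · have hs : ins 0 π s.succ = Fin.castSucc (π s) := by
        rw [← Fin.succAbove_zero_apply, ins_succAbove]
      have ht : ins 0 π t.succ = Fin.castSucc (π t) := by
        rw [← Fin.succAbove_zero_apply, ins_succAbove]
      rw [hs, ht, Fin.castSucc_lt_castSucc_iff]
      have hst : s < t := by
        rw [Fin.lt_def] at hij' ⊢
        simpa using hij'
      have htr : (t : ℕ) < run π := by
        have : (t : ℕ) + 1 < run π + 1 := by simpa using hj'
        omega
      exact decPre_run π s t hst htr
  · have := run_le π; omega
  · intro hlt hd
    have hrn : run π < n := by omega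
    obtain ⟨i, j, hij, hjr, hne⟩ : ∃ i j : Fin n, i < j ∧ (j : ℕ) < run π + 1 ∧ ¬ π j < π i := by
      by_contra hc
      push_neg at hc
      exact not_decPre_succ_run hrn fun i j a b => hc i j a b
    have h1 : π i < π j := by
      rcases lt_trichotomy (π i) (π j) with h | h | h
      · exact h
      · exact absurd (Equiv.injective π h) (Fin.ne_of_lt hij)
      · exact absurd h hne
    have hs : ins 0 π i.succ = Fin.castSucc (π i) := by
      rw [← Fin.succAbove_zero_apply, ins_succAbove]
    have ht : ins 0 π j.succ = Fin.castSucc (π j) := by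
      rw [← Fin.succAbove_zero_apply, ins_succAbove]
    have := hd i.succ j.succ (by rw [Fin.lt_def]; simpa using hij)
      (by simp [Fin.val_succ]; omega)
    rw [hs, ht, Fin.castSucc_lt_castSucc_iff] at this
    exact absurd h1 this.asymm

lemma ins_apply_of_lt {n : ℕ} (p : Fin (n + 1)) (π : Equiv.Perm (Fin n)) (a : Fin (n + 1))
    (ha : a < p) (han : (a : ℕ) < n) :
    ins p π a = Fin.castSucc (π ⟨a, han⟩) := by
  have : p.succAbove ⟨(a : ℕ), han⟩ = a := by
    rw [Fin.succAbove_of_castSucc_lt p _ (by rw [Fin.lt_def]; simpa using ha)]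
    ext; simp
  have h2 := ins_succAbove p π ⟨(a : ℕ), han⟩
  rw [this] at h2
  exact h2

lemma run_ins_pos {n : ℕ} (p : Fin (n + 1)) (π : Equiv.Perm (Fin n)) (hp : p ≠ 0)
    (hdec : DecPre π p) : run (ins p π) = (p : ℕ) := by
  have hp1 : 1 ≤ (p : ℕ) := by
    rcases Nat.eq_zero_or_pos (p : ℕ) with h | h
    · exact absurd (Fin.ext h) hp
    · exact h
  have hpn : (p : ℕ) ≤ n := by
    have := p.isLt; omega
  apply run_eq_of
  · intro i' j' hij' hj'
    have hjp : j' < p := by rw [Fin.lt_def]; exact hj'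
    have hip : i' < p := lt_trans hij' hjp
    have hjn : (j' : ℕ) < n := by have := hjp; rw [Fin.lt_def] at this; omega
    have hin : (i' : ℕ) < n := by have h := hij'; rw [Fin.lt_def] at h; omega
    rw [ins_apply_of_lt p π j' hjp hjn, ins_apply_of_lt p π i' hip hin,
      Fin.castSucc_lt_castSucc_iff]
    exact hdec ⟨i', hin⟩ ⟨j', hjn⟩ (by rw [Fin.lt_def]; exact hij') hj'
  · omega
  · intro _ hd
    have := hd ⟨(p : ℕ) - 1, by omega⟩ p (by rw [Fin.lt_def]; show (p : ℕ) - 1 < p; omega) (by omega)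
    rw [ins_self] at this
    exact absurd this (Fin.le_last _).not_gt

/-- number of 123-avoiding permutations with initial decreasing run exactly `k` -/
noncomputable def cRun (n k : ℕ) : ℕ :=
  Nat.card {π : Equiv.Perm (Fin n) // Avoids123 π ∧ run π = k}

/-- number of 123-avoiding permutations with initial decreasing run at least `k` -/
noncomputable def NRun (n k : ℕ) : ℕ :=
  Nat.card {π : Equiv.Perm (Fin n) // Avoids123 π ∧ k ≤ run π}

lemma NRun_split (n k : ℕ) : NRun n k = cRun n k + NRun n (k + 1) := by
  apply card_split
  · intro π
    constructor
    · rintro ⟨h1, h2⟩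
      rcases eq_or_lt_of_le h2 with h | h
      · exact Or.inl ⟨h1, h.symm⟩
      · exact Or.inr ⟨h1, h⟩
    · rintro (⟨h1, h2⟩ | ⟨h1, h2⟩)
      · exact ⟨h1, h2.ge⟩
      · exact ⟨h1, by omega⟩
  · rintro π ⟨⟨_, h1⟩, ⟨_, h2⟩⟩
    omega

lemma cRun_vanish {n k : ℕ} (h : n < k) : cRun n k = 0 := by
  apply card_zero_of
  rintro π ⟨_, h2⟩
  have := run_le π
  omega

lemma NRun_vanish {n k : ℕ} (h : n < k) : NRun n k = 0 := by
  apply card_zero_of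
  rintro π ⟨_, h2⟩
  have := run_le π
  omega

lemma cRun_zero_zero : cRun 0 0 = 1 := by
  have h : ∀ π : Equiv.Perm (Fin 0), Avoids123 π ∧ run π = 0 := by
    intro π
    refine ⟨?_, le_antisymm (run_le π) (Nat.zero_le _)⟩
    rintro ⟨i, _, _, _⟩
    exact i.elim0
  rw [cRun, Nat.card_congr (Equiv.subtypeUnivEquiv h), Nat.card_eq_fintype_card]
  simp

lemma cRun_pos_zero (n : ℕ) : cRun (n + 1) 0 = 0 := by
  apply card_zero_of
  rintro π ⟨_, h2⟩
  have := one_le_run π (by omega)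
  omega

lemma cRun_succ (n k : ℕ) : cRun (n + 1) (k + 1) = cRun n k + NRun n (k + 1) := by
  have e0 : {σ : Equiv.Perm (Fin (n+1)) // Avoids123 σ ∧ run σ = k + 1} ≃
      {x : Fin (n + 1) × Equiv.Perm (Fin n) //
        Avoids123 (ins x.1 x.2) ∧ run (ins x.1 x.2) = k + 1} :=
    ((Equiv.ofBijective _ (ins_bijective n)).subtypeEquiv (fun x => Iff.rfl)).symm
  rw [cRun, Nat.card_congr e0]
  have key : Nat.card {x : Fin (n + 1) × Equiv.Perm (Fin n) //
        Avoids123 (ins x.1 x.2) ∧ run (ins x.1 x.2) = k + 1} =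
      Nat.card {x : Fin (n + 1) × Equiv.Perm (Fin n) //
        x.1 = 0 ∧ Avoids123 x.2 ∧ run x.2 = k} +
      Nat.card {x : Fin (n + 1) × Equiv.Perm (Fin n) //
        (x.1 : ℕ) = k + 1 ∧ Avoids123 x.2 ∧ k + 1 ≤ run x.2} := by
    apply card_split
    · rintro ⟨p, π⟩
      simp only
      rw [avoids_ins]
      constructor
      · rintro ⟨⟨hav, hdec⟩, hrun⟩
        by_cases hp : p = 0
        · subst hp
          rw [run_ins_zero] at hrun
          exact Or.inl ⟨rfl, hav, by omega⟩
        · rw [run_ins_pos p π hp hdec] at hrun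
          refine Or.inr ⟨hrun, hav, ?_⟩
          have hpn : (p : ℕ) ≤ n := by have := p.isLt; omega
          rw [← hrun]
          exact (le_run_iff hpn).mp hdec
      · rintro (⟨hp, hav, hrun⟩ | ⟨hp, hav, hrun⟩)
        · subst hp
          refine ⟨⟨hav, decPre_zero π⟩, ?_⟩
          rw [run_ins_zero]; omega
        · have hpn : (p : ℕ) ≤ n := by have := run_le π; omega
          have hp0 : p ≠ 0 := by
            intro e
            rw [e] at hp
            simp at hp
          have hdec : DecPre π p := by
            rw [hp]
            exact (le_run_iff (by omega)).mpr hrun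
          refine ⟨⟨hav, hdec⟩, ?_⟩
          rw [run_ins_pos p π hp0 hdec, hp]
    · rintro ⟨p, π⟩ ⟨⟨h1, _⟩, ⟨h2, _⟩⟩
      rw [h1] at h2
      simp at h2
  rw [key]
  congr 1
  · apply Nat.card_congr
    refine ⟨fun x => ⟨x.1.2, x.2.2⟩, fun π => ⟨(0, π.1), rfl, π.2⟩, ?_, ?_⟩
    · rintro ⟨⟨p, π⟩, hp, hπ⟩
      simp only [Subtype.mk.injEq, Prod.mk.injEq]
      exact ⟨hp.symm, trivial⟩
    · rintro ⟨π, hπ⟩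
      rfl
  · apply Nat.card_congr
    refine ⟨fun x => ⟨x.1.2, x.2.2⟩,
      fun π => ⟨(⟨k + 1, by have := run_le π.1; have := π.2.2; omega⟩, π.1),
        rfl, π.2⟩, ?_, ?_⟩
    · rintro ⟨⟨p, π⟩, hp, hπ⟩
      simp only [Subtype.mk.injEq, Prod.mk.injEq]
      exact ⟨Fin.ext hp.symm, trivial⟩
    · rintro ⟨π, hπ⟩
      rfl

lemma NRun_eq_sum (n : ℕ) : ∀ k, NRun n k = ∑ r ∈ Icc k n, cRun n r := by
  have H : ∀ d k, n + 1 - k ≤ d → NRun n k = ∑ r ∈ Icc k n, cRun n r := by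
    intro d
    induction d with
    | zero =>
      intro k hk
      rw [NRun_vanish (by omega), Icc_eq_empty (by omega), sum_empty]
    | succ d ihd =>
      intro k hk
      rcases le_or_gt k n with h | h
      · rw [NRun_split, ihd (k + 1) (by omega)]
        rw [show Icc k n = insert k (Icc (k + 1) n) by
          ext x; simp only [mem_Icc, mem_insert]; omega]
        rw [sum_insert (by simp)]
      · rw [NRun_vanish h, Icc_eq_empty (by omega), sum_empty]
  exact fun k => H (n + 1) k (by omega)

lemma master : ∀ n k, cRun (n + 1) (k + 1) = ∑ i ∈ range (n - k + 1), catalan i * cRun (n - i) k := by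
  have Nsum : ∀ (n k : ℕ), NRun n k = ∑ r ∈ Icc k n, cRun n r := NRun_eq_sum
  intro n
  induction n using Nat.strong_induction_on with
  | _ n ih =>
  have hzero : ∀ j, j ≠ 0 → cRun j 0 = 0 := by
    intro j hj
    cases j with
    | zero => exact absurd rfl hj
    | succ m => exact cRun_pos_zero m
  have total : ∀ m, m < n → NRun m 0 = catalan m := by
    intro m hm
    have h1 : NRun m 0 = cRun (m + 1) 1 := by rw [NRun_split, cRun_succ]
    rw [h1, ih m hm 0]
    rw [Finset.sum_eq_single_of_mem m (by simp)]
    · simp [cRun_zero_zero]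
    · intro i hi hne
      rw [hzero (m - i) (by simp at hi; omega), mul_zero]
  intro k
  rcases n with _ | N
  · rw [cRun_succ, NRun_vanish (by omega)]
    rw [show (0 : ℕ) - k + 1 = 1 by omega, sum_range_one]
    simp
  · have sum_shift : ∀ (a b : ℕ) (f : ℕ → ℕ),
        ∑ r ∈ Icc a b, f r = ∑ t ∈ range (b + 1 - a), f (a + t) := by
      intro a b f
      rw [← Finset.Ico_add_one_right_eq_Icc, Finset.sum_Ico_eq_sum_range]
    rcases k with _ | k'
    · have lhs : cRun (N + 2) 1 = catalan (N + 1) := by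
        rw [cRun_succ, cRun_pos_zero, zero_add]
        rw [Nsum (N + 1) 1]
        rw [sum_shift 1 (N + 1) _]
        have e1 : ∀ s ∈ range (N + 1), cRun (N + 1) (1 + s) =
            ∑ i ∈ range (N + 1), catalan i * cRun (N - i) s := by
          intro s hs
          simp only [mem_range] at hs
          rw [show 1 + s = s + 1 by omega, ih N (by omega) s]
          apply Finset.sum_subset (Finset.range_subset_range.mpr (by omega))
          intro i hi hni
          simp only [mem_range] at hi hni
          rw [cRun_vanish (show N - i < s by omega), mul_zero]
        rw [show N + 1 + 1 - 1 = N + 1 by omega]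
        rw [Finset.sum_congr rfl e1, Finset.sum_comm]
        have e2 : ∀ i ∈ range (N + 1), ∑ s ∈ range (N + 1), catalan i * cRun (N - i) s =
            catalan i * catalan (N - i) := by
          intro i hi
          simp only [mem_range] at hi
          rw [← Finset.mul_sum]
          congr 1
          rw [← Finset.sum_subset (Finset.range_subset_range.mpr (show N - i + 1 ≤ N + 1 by omega))
            (by intro s hs hns; simp only [mem_range] at hs hns; exact cRun_vanish (by omega))]
          rw [show range (N - i + 1) = Icc 0 (N - i) by ext x; simp]
          rw [← Nsum (N - i) 0]
          exact total (N - i) (by omega)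
        rw [Finset.sum_congr rfl e2, catalan_succ N,
          Fin.sum_univ_eq_sum_range (fun i => catalan i * catalan (N - i))]
      rw [lhs]
      rw [Finset.sum_eq_single_of_mem (N + 1) (by simp)]
      · simp [cRun_zero_zero]
      · intro i hi hne
        rw [hzero (N + 1 - i) (by simp at hi; omega), mul_zero]
    · rw [show N + 1 - (k' + 1) + 1 = N - k' + 1 by omega]
      have rhs_split : ∑ i ∈ range (N - k' + 1), catalan i * cRun (N + 1 - i) (k' + 1) =
          (∑ i ∈ range (N - k' + 1), catalan i * cRun (N - i) k') +
          ∑ i ∈ range (N - k' + 1), catalan i * NRun (N - i) (k' + 1) := by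
        rw [← Finset.sum_add_distrib]
        apply Finset.sum_congr rfl
        intro i hi
        simp only [mem_range] at hi
        rw [show N + 1 - i = (N - i) + 1 by omega, cRun_succ, mul_add]
      rw [rhs_split, cRun_succ, ← ih N (by omega) k']
      congr 1
      rw [Nsum (N + 1) (k' + 2)]
      have e3 : ∀ i ∈ range (N - k' + 1), catalan i * NRun (N - i) (k' + 1) =
          ∑ r ∈ Icc (k' + 1) N, catalan i * cRun (N - i) r := by
        intro i hi
        simp only [mem_range] at hi
        rw [Nsum (N - i) (k' + 1), Finset.mul_sum]
        apply Finset.sum_subset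
        · intro x hx; simp only [mem_Icc] at hx ⊢; omega
        · intro r hr hnr
          simp only [mem_Icc] at hr hnr
          rw [cRun_vanish (show N - i < r by omega), mul_zero]
      rw [Finset.sum_congr rfl e3, Finset.sum_comm]
      have e4 : ∀ r ∈ Icc (k' + 1) N, ∑ i ∈ range (N - k' + 1), catalan i * cRun (N - i) r =
          cRun (N + 1) (r + 1) := by
        intro r hr
        simp only [mem_Icc] at hr
        rw [ih N (by omega) r]
        symm
        apply Finset.sum_subset (Finset.range_subset_range.mpr (by omega))
        intro i hi hni
        simp only [mem_range] at hi hni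
        rw [cRun_vanish (show N - i < r by omega), mul_zero]
      rw [Finset.sum_congr rfl e4]
      rw [sum_shift (k' + 2) (N + 1) _, sum_shift (k' + 1) N _]
      apply Finset.sum_congr (by congr 1; omega)
      intro t _
      congr 1
      omega

lemma count_eq_catalan (n : ℕ) :
    Nat.card {π : Equiv.Perm (Fin n) // Avoids123 π} = catalan n := by
  have h0 : Nat.card {π : Equiv.Perm (Fin n) // Avoids123 π} = NRun n 0 := by
    apply Nat.card_congr
    exact Equiv.subtypeEquivRight (fun π => by simp [Nat.zero_le])
  have hzero : ∀ j, j ≠ 0 → cRun j 0 = 0 := by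
    intro j hj
    cases j with
    | zero => exact absurd rfl hj
    | succ m => exact cRun_pos_zero m
  rw [h0, NRun_split, ← cRun_succ, master n 0]
  rw [Finset.sum_eq_single_of_mem n (by simp)]
  · simp [cRun_zero_zero]
  · intro i hi hne
    rw [hzero (n - i) (by simp at hi; omega), mul_zero]

end Av123

theorem count_avoiding_123_eq_catalan (n : ℕ) :
    Nat.card {π : Equiv.Perm (Fin n) // Avoids123 π} = catalan n ∧
    catalan n = (2 * n).factorial / (n.factorial * (n + 1).factorial) := by
  constructor
  · exact Av123.count_eq_catalan n
  · rw [catalan_eq_centralBinom_div, Nat.centralBinom,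
      Nat.choose_eq_factorial_div_factorial (by omega : n ≤ 2 * n),
      show 2 * n - n = n by omega, Nat.div_div_eq_div_mul]
    congr 1
    rw [Nat.factorial_succ]
    ring
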